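/- Mean-payoff games reduce to average-energy games by edge doubling: let G = (S₁, S₂, E, w) be a game and define G' = (S₁ ∪ E, S₂, E', w') where for every edge e = (s, s') ∈ E, G' has an edge (s, e) with weight w'(s, e) = 2·w(e) and an edge (e, s') with weight w'(e, s') = −2·w(e) (these are all the edges of G', and every state e ∈ E belongs to player 1). Then for every s₀ ∈ S and t ∈ ℚ, player 1 has a winning strategy from s₀ for MeanPayOff(t) in G if and only if player 1 has a winning strategy from s₀ for AvgEnergyLevel(t) in G'. -/

import Mathlib

open Filter

noncomputable section

/-- A two-player turn-based game on a (finite) state space `S`: `p1 s` holds iff state `s`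
belongs to player 1 (otherwise it belongs to player 2), `E` is the edge relation (every state
has a successor), and `w` assigns an integer weight to every edge. -/
structure Game (S : Type) where
  p1 : S → Prop
  E : S → S → Prop
  w : S → S → ℤ
  succ : ∀ s, ∃ t, E s t

variable {S : Type}

/-- `π` is a play of `G` starting from `s₀`. -/
def IsPlay (G : Game S) (s₀ : S) (π : ℕ → S) : Prop :=
  π 0 = s₀ ∧ ∀ n, G.E (π n) (π (n + 1))

/-- Energy level of the play `π` at position `n`. -/
def ELp (G : Game S) (π : ℕ → S) (n : ℕ) : ℤ :=
  ∑ i ∈ Finset.range n, G.w (π i) (π (i + 1))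

/-- Average-energy of a play (limsup variant), in the extended reals. -/
def AEsupP (G : Game S) (π : ℕ → S) : EReal :=
  limsup (fun n : ℕ => (((∑ i ∈ Finset.range n, (ELp G π (i + 1) : ℝ)) / n : ℝ) : EReal)) atTop

/-- Average-energy of a play (liminf variant). -/
def AEinfP (G : Game S) (π : ℕ → S) : EReal :=
  liminf (fun n : ℕ => (((∑ i ∈ Finset.range n, (ELp G π (i + 1) : ℝ)) / n : ℝ) : EReal)) atTop

/-- Mean-payoff of a play (limsup variant). -/
def MPsupP (G : Game S) (π : ℕ → S) : EReal :=
  limsup (fun n : ℕ => (((ELp G π n : ℝ) / n : ℝ) : EReal)) atTop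

/-- Total-payoff of a play (limsup variant). -/
def TPsupP (G : Game S) (π : ℕ → S) : EReal :=
  limsup (fun n : ℕ => ((ELp G π n : ℝ) : EReal)) atTop

/-- The history (finite prefix) `π 0, …, π n` of a play, as a list. -/
def hist (π : ℕ → S) (n : ℕ) : List S := List.ofFn (fun i : Fin (n + 1) => π i)

/-- A (deterministic) strategy for player 1: on every nonempty finite path of `G` ending in a
player-1 state, it prescribes an `E`-successor of the last state. -/
def IsStrat1 (G : Game S) (σ : List S → S) : Prop :=
  ∀ (ρ : List S) (h : ρ ≠ []), List.Chain' G.E ρ → G.p1 (ρ.getLast h) →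
    G.E (ρ.getLast h) (σ ρ)

/-- A strategy for player 2 (who owns the states where `p1` fails). -/
def IsStrat2 (G : Game S) (σ : List S → S) : Prop :=
  ∀ (ρ : List S) (h : ρ ≠ []), List.Chain' G.E ρ → ¬ G.p1 (ρ.getLast h) →
    G.E (ρ.getLast h) (σ ρ)

/-- A strategy is memoryless if its choice only depends on the last state of the history. -/
def Memoryless (σ : List S → S) : Prop :=
  ∀ (ρ ρ' : List S) (h : ρ ≠ []) (h' : ρ' ≠ []),
    ρ.getLast h = ρ'.getLast h' → σ ρ = σ ρ'

/-- The play `π` is consistent with the player-1 strategy `σ`. -/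
def Consistent1 (G : Game S) (σ : List S → S) (π : ℕ → S) : Prop :=
  ∀ n, G.p1 (π n) → π (n + 1) = σ (hist π n)

/-- The play `π` is consistent with the player-2 strategy `σ`. -/
def Consistent2 (G : Game S) (σ : List S → S) (π : ℕ → S) : Prop :=
  ∀ n, ¬ G.p1 (π n) → π (n + 1) = σ (hist π n)

/-- `σ` is a winning strategy for player 1 from `s₀` for the objective `Obj`:
every consistent play from `s₀` belongs to `Obj`. -/
def Winning1 (G : Game S) (s₀ : S) (σ : List S → S) (Obj : (ℕ → S) → Prop) : Prop :=
  IsStrat1 G σ ∧ ∀ π, IsPlay G s₀ π → Consistent1 G σ π → Obj π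

/-- `σ` is a winning strategy for player 2 from `s₀` against the objective `Obj`:
every consistent play from `s₀` lies outside `Obj`. -/
def Winning2 (G : Game S) (s₀ : S) (σ : List S → S) (Obj : (ℕ → S) → Prop) : Prop :=
  IsStrat2 G σ ∧ ∀ π, IsPlay G s₀ π → Consistent2 G σ π → ¬ Obj π

/-- Average-energy objective: the average-energy of the play is at most `t`. -/
def AvgEnergyLevel (G : Game S) (t : ℚ) : (ℕ → S) → Prop :=
  fun π => AEsupP G π ≤ ((t : ℝ) : EReal)

/-- Mean-payoff objective: the mean-payoff of the play is at most `t`. -/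
def MeanPayOff (G : Game S) (t : ℚ) : (ℕ → S) → Prop :=
  fun π => MPsupP G π ≤ ((t : ℝ) : EReal)

/-- Total-payoff objective: the total-payoff of the play is at most `t`. -/
def TotalPayOff (G : Game S) (t : ℤ) : (ℕ → S) → Prop :=
  fun π => TPsupP G π ≤ ((t : ℝ) : EReal)

/-- Lower-bounded energy objective with initial credit `c₀`. -/
def LowerObj (G : Game S) (c₀ : ℕ) : (ℕ → S) → Prop :=
  fun π => ∀ n, 0 ≤ (c₀ : ℤ) + ELp G π n

/-- Lower- and upper-bounded energy objective with upper bound `U` and initial credit `c₀`. -/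
def LUObj (G : Game S) (U c₀ : ℕ) : (ℕ → S) → Prop :=
  fun π => ∀ n, 0 ≤ (c₀ : ℤ) + ELp G π n ∧ (c₀ : ℤ) + ELp G π n ≤ (U : ℤ)

/-- The edge-doubling game `G'` built from `G`: its states are the states of `G` (owned as in
`G`) together with one player-1 state per edge of `G`; each edge `e = (s, s')` of `G` is split
into `s → e` of weight `2·w(e)` followed by `e → s'` of weight `-2·w(e)`. -/
def dblGame (G : Game S) : Game (S ⊕ {e : S × S // G.E e.1 e.2}) where
  p1 := fun x => match x with
    | Sum.inl s => G.p1 s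
    | Sum.inr _ => True
  E := fun x y => match x, y with
    | Sum.inl s, Sum.inr e => e.1.1 = s
    | Sum.inr e, Sum.inl s' => e.1.2 = s'
    | _, _ => False
  w := fun x y => match x, y with
    | Sum.inl _, Sum.inr e => 2 * G.w e.1.1 e.1.2
    | Sum.inr e, Sum.inl _ => -(2 * G.w e.1.1 e.1.2)
    | _, _ => 0
  succ := by
    rintro (s | e)
    · obtain ⟨u, hu⟩ := G.succ s
      exact ⟨Sum.inr ⟨(s, u), hu⟩, rfl⟩
    · exact ⟨Sum.inl e.1.2, rfl⟩


namespace MPAE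

variable {S : Type}

/-- The doubled play in `dblGame G` corresponding to a play `π` of `G`. -/
def dblPlay (G : Game S) (π : ℕ → S) (h : ∀ n, G.E (π n) (π (n + 1))) :
    ℕ → S ⊕ {e : S × S // G.E e.1 e.2} := fun n =>
  if n % 2 = 0 then Sum.inl (π (n / 2)) else Sum.inr ⟨(π (n / 2), π (n / 2 + 1)), h _⟩

lemma dblPlay_even (G : Game S) (π : ℕ → S) (h : ∀ n, G.E (π n) (π (n + 1))) (n : ℕ) :
    dblPlay G π h (2 * n) = Sum.inl (π n) := by
  simp [dblPlay, Nat.mul_mod_right, Nat.mul_div_cancel_left _ (by norm_num : (0:ℕ) < 2)]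

lemma dblPlay_odd (G : Game S) (π : ℕ → S) (h : ∀ n, G.E (π n) (π (n + 1))) (n : ℕ) :
    dblPlay G π h (2 * n + 1) = Sum.inr ⟨(π n, π (n + 1)), h n⟩ := by
  have h1 : (2 * n + 1) % 2 = 1 := by omega
  have h2 : (2 * n + 1) / 2 = n := by omega
  simp [dblPlay, h1, h2]

lemma EL_dbl_even (G : Game S) (π : ℕ → S) (h : ∀ n, G.E (π n) (π (n + 1))) (n : ℕ) :
    ELp (dblGame G) (dblPlay G π h) (2 * n) = 0 := by
  induction n with
  | zero => simp [ELp]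
  | succ n ih =>
    have e1 : dblPlay G π h (2 * n + 1 + 1) = Sum.inl (π (n + 1)) := by
      rw [show 2 * n + 1 + 1 = 2 * (n + 1) by ring, dblPlay_even]
    have : 2 * (n + 1) = (2 * n + 1) + 1 := by ring
    rw [this, ELp, Finset.sum_range_succ, Finset.sum_range_succ, ← ELp, ih,
      dblPlay_even, dblPlay_odd, e1]
    simp [dblGame]

lemma EL_dbl_odd (G : Game S) (π : ℕ → S) (h : ∀ n, G.E (π n) (π (n + 1))) (n : ℕ) :
    ELp (dblGame G) (dblPlay G π h) (2 * n + 1) = 2 * G.w (π n) (π (n + 1)) := by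
  rw [ELp, Finset.sum_range_succ, ← ELp, EL_dbl_even, dblPlay_even, dblPlay_odd]
  simp [dblGame]

end MPAE
namespace MPAE

lemma ELp_succ (G : Game S) (π : ℕ → S) (n : ℕ) :
    ELp G π (n + 1) = ELp G π n + G.w (π n) (π (n + 1)) := Finset.sum_range_succ _ _

lemma Ssum_even (G : Game S) (π : ℕ → S) (h : ∀ n, G.E (π n) (π (n + 1))) (n : ℕ) :
    (∑ i ∈ Finset.range (2 * n), (ELp (dblGame G) (dblPlay G π h) (i + 1) : ℝ)) =
      2 * (ELp G π n : ℝ) := by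
  induction n with
  | zero => simp [ELp]
  | succ n ih =>
    have e1 : (2 * n : ℕ) + 1 = 2 * n + 1 := rfl
    rw [show 2 * (n + 1) = (2 * n + 1) + 1 by ring, Finset.sum_range_succ,
      Finset.sum_range_succ, ih]
    rw [show (2 * n + 1 : ℕ) + 1 = 2 * (n + 1) by ring, EL_dbl_even, EL_dbl_odd,
      ELp_succ]
    push_cast
    ring

lemma Ssum_odd (G : Game S) (π : ℕ → S) (h : ∀ n, G.E (π n) (π (n + 1))) (n : ℕ) :
    (∑ i ∈ Finset.range (2 * n + 1), (ELp (dblGame G) (dblPlay G π h) (i + 1) : ℝ)) =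
      2 * (ELp G π (n + 1) : ℝ) := by
  rw [Finset.sum_range_succ, Ssum_even, show (2 * n : ℕ) + 1 = 2 * n + 1 from rfl, EL_dbl_odd,
    ELp_succ]
  push_cast
  ring

/-- Bound on energy levels: `|EL(n)| ≤ n * W`. -/
lemma EL_bound (G : Game S) (π : ℕ → S) (W : ℝ) (hW : ∀ s s', |(G.w s s' : ℝ)| ≤ W) (n : ℕ) :
    |(ELp G π n : ℝ)| ≤ n * W := by
  induction n with
  | zero => simp [ELp]
  | succ n ih =>
    rw [ELp_succ]
    push_cast
    calc |(ELp G π n : ℝ) + (G.w (π n) (π (n+1)) : ℝ)| ≤ _ + _ := abs_add_le _ _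
      _ ≤ n * W + W := add_le_add ih (hW _ _)
      _ = (n + 1) * W := by ring

lemma EReal_le_coe_of_forall {x : EReal} {c : ℝ} (h : ∀ ε : ℝ, 0 < ε → x ≤ ((c + ε : ℝ) : EReal)) :
    x ≤ (c : ℝ) := by
  by_contra hx
  push_neg at hx
  obtain ⟨d, hd1, hd2⟩ := exists_between hx
  have hdt : d ≠ ⊤ := hd2.ne_top
  have hdb : d ≠ ⊥ := ne_bot_of_gt hd1
  lift d to ℝ using ⟨hdt, hdb⟩
  have hcd : c < d := by exact_mod_cast hd1
  have := h (d - c) (by linarith)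
  rw [show c + (d - c) = d by ring] at this
  exact absurd (this.trans_lt hd2) (lt_irrefl _)

lemma limsup_comp_le {b : ℕ → EReal} {φ : ℕ → ℕ} (hφ : Filter.Tendsto φ Filter.atTop Filter.atTop) :
    Filter.limsup (fun n => b (φ n)) Filter.atTop ≤ Filter.limsup b Filter.atTop := by
  rw [Filter.limsup_eq, Filter.limsup_eq]
  apply sInf_le_sInf
  intro a ha
  exact hφ.eventually ha

end MPAE
namespace MPAE

lemma b_even (G : Game S) (π : ℕ → S) (h : ∀ n, G.E (π n) (π (n + 1))) (n : ℕ) :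
    (∑ i ∈ Finset.range (2 * n), (ELp (dblGame G) (dblPlay G π h) (i + 1) : ℝ)) / ((2 * n : ℕ) : ℝ)
      = (ELp G π n : ℝ) / n := by
  rw [Ssum_even]
  rcases eq_or_ne n 0 with rfl | hn
  · simp [ELp]
  · push_cast
    rw [mul_div_mul_left _ _ (two_ne_zero)]

set_option maxHeartbeats 1000000 in
lemma MP_le_AE (G : Game S) (π : ℕ → S) (h : ∀ n, G.E (π n) (π (n + 1))) :
    MPsupP G π ≤ AEsupP (dblGame G) (dblPlay G π h) := by
  have hφ : Filter.Tendsto (fun n : ℕ => 2 * n) Filter.atTop Filter.atTop :=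
    Filter.tendsto_atTop_atTop.2 (fun b => ⟨b, fun a ha => by omega⟩)
  have heq : (fun n : ℕ => (((ELp G π n : ℝ) / n : ℝ) : EReal)) =
      (fun N : ℕ => (((∑ i ∈ Finset.range N, (ELp (dblGame G) (dblPlay G π h) (i + 1) : ℝ)) / N
        : ℝ) : EReal)) ∘ (fun n => 2 * n) := by
    funext n
    simp only [Function.comp_apply]
    rw [b_even G π h n]
  rw [MPsupP, AEsupP, heq]
  exact limsup_comp_le (b := fun N : ℕ =>
    (((∑ i ∈ Finset.range N, (ELp (dblGame G) (dblPlay G π h) (i + 1) : ℝ)) / N : ℝ) : EReal)) hφ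

lemma AE_le_of_MP_le [Fintype S] (G : Game S) (π : ℕ → S) (h : ∀ n, G.E (π n) (π (n + 1)))
    (c : ℝ) (hMP : MPsupP G π ≤ (c : EReal)) :
    AEsupP (dblGame G) (dblPlay G π h) ≤ (c : EReal) := by
  apply EReal_le_coe_of_forall
  intro ε hε
  have hne : Nonempty S := ⟨π 0⟩
  have hne2 : (Finset.univ : Finset (S × S)).Nonempty := Finset.univ_nonempty
  set W : ℝ := Finset.univ.sup' hne2 (fun p : S × S => |(G.w p.1 p.2 : ℝ)|) with hWdef
  have hW : ∀ s s', |(G.w s s' : ℝ)| ≤ W := fun s s' =>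
    Finset.le_sup' (f := fun p : S × S => |(G.w p.1 p.2 : ℝ)|) (Finset.mem_univ (s, s'))
  have hW0 : 0 ≤ W := le_trans (abs_nonneg _) (hW (π 0) (π 0))
  -- eventual bound on the mean-payoff sequence
  have hlt : MPsupP G π < ((c + ε / 2 : ℝ) : EReal) :=
    lt_of_le_of_lt hMP (by exact_mod_cast (by linarith : c < c + ε / 2))
  have hev : ∀ᶠ n : ℕ in Filter.atTop, (ELp G π n : ℝ) / n < c + ε / 2 := by
    have := Filter.eventually_lt_of_limsup_lt hlt
    filter_upwards [this] with n hn
    exact_mod_cast hn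
  obtain ⟨n₀, hn₀⟩ := Filter.eventually_atTop.mp hev
  obtain ⟨n₁, hn₁⟩ := exists_nat_ge (W / ε)
  have hWn1 : W ≤ ε * n₁ := by
    rw [div_le_iff₀ hε] at hn₁
    linarith
  rw [AEsupP]
  refine Filter.limsup_le_of_le (by isBoundedDefault) ?_
  rw [Filter.eventually_atTop]
  refine ⟨2 * n₀ + 2 * n₁ + 2, fun N hN => ?_⟩
  rw [EReal.coe_le_coe_iff]
  rcases Nat.even_or_odd N with ⟨n, hn⟩ | ⟨n, hn⟩
  · have hNn : N = 2 * n := by omega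
    subst hNn
    rw [b_even G π h n]
    have : (ELp G π n : ℝ) / n < c + ε / 2 := hn₀ n (by omega)
    linarith
  · have hNn : N = 2 * n + 1 := by omega
    subst hNn
    rw [Ssum_odd]
    have hcast : ((2 * n + 1 : ℕ) : ℝ) = 2 * (n : ℝ) + 1 := by push_cast; ring
    rw [hcast]
    set x : ℝ := (ELp G π (n + 1) : ℝ) with hx_def
    have hx : |x| ≤ ((n : ℝ) + 1) * W := by
      have := EL_bound G π W hW (n + 1)
      push_cast at this
      linarith [this]
    have hposn : (0 : ℝ) < 2 * (n : ℝ) + 1 := by positivity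
    have hposn1 : (0 : ℝ) < (n : ℝ) + 1 := by positivity
    have key : 2 * x / (2 * (n : ℝ) + 1) ≤ x / ((n : ℝ) + 1) + W / (2 * (n : ℝ) + 1) := by
      rw [div_add_div _ _ (ne_of_gt hposn1) (ne_of_gt hposn),
        div_le_div_iff₀ hposn (by positivity)]
      nlinarith [abs_le.mp hx]
    have ha : x / ((n : ℝ) + 1) < c + ε / 2 := by
      have := hn₀ (n + 1) (by omega)
      push_cast at this
      convert this using 2 <;> push_cast <;> ring
    have hWsmall : W / (2 * (n : ℝ) + 1) ≤ ε / 2 := by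
      rw [div_le_iff₀ hposn]
      have hn1n : (n₁ : ℝ) ≤ (n : ℝ) := by exact_mod_cast Nat.cast_le.mpr (by omega : n₁ ≤ n)
      nlinarith
    linarith
end MPAE
namespace MPAE

lemma hist_ne_nil (π : ℕ → S) (n : ℕ) : hist π n ≠ [] := by
  simp [hist]

lemma hist_zero (π : ℕ → S) : hist π 0 = [π 0] := rfl

lemma hist_eq (π : ℕ → S) (n : ℕ) :
    hist π n = π 0 :: List.ofFn (fun i : Fin n => π (i + 1)) := by
  rw [hist, List.ofFn_succ]
  simp only [Fin.val_zero, Fin.val_succ]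

lemma hist_succ_shift (π : ℕ → S) (n : ℕ) :
    hist π (n + 1) = π 0 :: hist (fun i => π (i + 1)) n := by
  rw [hist_eq, hist]

lemma hist_concat (π : ℕ → S) (n : ℕ) :
    hist π (n + 1) = hist π n ++ [π (n + 1)] := by
  rw [hist, List.ofFn_succ']
  simp [hist, List.concat_eq_append, Fin.coe_castSucc, Fin.val_last]

lemma hist_getLast? (π : ℕ → S) (n : ℕ) :
    (hist π n).getLast? = some (π n) := by
  cases n with
  | zero => rfl
  | succ n => rw [hist_concat, List.getLast?_concat]

lemma hist_getLast (π : ℕ → S) (n : ℕ) :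
    (hist π n).getLast (hist_ne_nil π n) = π n := by
  have h := hist_getLast? π n
  rw [List.getLast?_eq_getLast (hist_ne_nil π n)] at h
  exact Option.some.inj h

lemma hist_chain (G : Game S) (π : ℕ → S) (h : ∀ k, G.E (π k) (π (k + 1))) (n : ℕ) :
    List.Chain' G.E (hist π n) := by
  induction n with
  | zero => simp [hist_zero, List.Chain', List.isChain_singleton]
  | succ n ih =>
    rw [hist_concat]
    refine List.isChain_append.mpr ⟨ih, List.isChain_singleton _, ?_⟩
    intro x hx y hy
    rw [hist_getLast?] at hx
    simp at hx hy
    rw [← hx, ← hy]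
    exact h n

end MPAE
namespace MPAE

lemma dblPlay_shift2 (G : Game S) (π : ℕ → S) (h : ∀ n, G.E (π n) (π (n + 1))) :
    (fun m => dblPlay G π h (m + 2)) =
      dblPlay G (fun i => π (i + 1)) (fun i => h (i + 1)) := by
  funext m
  have h1 : (m + 2) % 2 = m % 2 := by omega
  have h2 : (m + 2) / 2 = m / 2 + 1 := by omega
  simp only [dblPlay, h1, h2]

lemma hist_succ2 (π : ℕ → S) (n : ℕ) :
    hist π (n + 2) = π 0 :: π 1 :: hist (fun i => π (i + 2)) n := by
  rw [hist_succ_shift, hist_succ_shift]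

/-- Project a history of the doubled game back to `G`. -/
def undbl (G : Game S) : List (S ⊕ {e : S × S // G.E e.1 e.2}) → List S :=
  List.filterMap (Sum.elim some (fun _ => none))

lemma undbl_cons_inl (G : Game S) (s : S) (L : List (S ⊕ {e : S × S // G.E e.1 e.2})) :
    undbl G (Sum.inl s :: L) = s :: undbl G L := by simp [undbl]

lemma undbl_cons_inr (G : Game S) (e : {e : S × S // G.E e.1 e.2})
    (L : List (S ⊕ {e : S × S // G.E e.1 e.2})) :
    undbl G (Sum.inr e :: L) = undbl G L := by simp [undbl, List.filterMap_cons]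

lemma undbl_hist (G : Game S) (π : ℕ → S) (h : ∀ n, G.E (π n) (π (n + 1))) (n : ℕ) :
    undbl G (hist (dblPlay G π h) (2 * n)) = hist π n := by
  induction n generalizing π h with
  | zero =>
    have h0 : dblPlay G π h 0 = Sum.inl (π 0) := dblPlay_even G π h 0
    simp [hist_zero, h0, undbl_cons_inl, undbl]
  | succ n ih =>
    have h0 : dblPlay G π h 0 = Sum.inl (π 0) := dblPlay_even G π h 0
    have h1 : dblPlay G π h 1 = Sum.inr ⟨(π 0, π 1), h 0⟩ := dblPlay_odd G π h 0
    rw [show 2 * (n + 1) = 2 * n + 2 by ring, hist_succ2, dblPlay_shift2, h0, h1,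
      undbl_cons_inl, undbl_cons_inr, ih (fun i => π (i + 1)) (fun i => h (i + 1)),
      ← hist_succ_shift]

open Classical in
/-- Double a history of `G` into a history of the doubled game. -/
def dblList (G : Game S) : List S → List (S ⊕ {e : S × S // G.E e.1 e.2})
  | [] => []
  | [s] => [Sum.inl s]
  | s :: s' :: l =>
      if h : G.E s s' then Sum.inl s :: Sum.inr ⟨(s, s'), h⟩ :: dblList G (s' :: l)
      else Sum.inl s :: dblList G (s' :: l)

lemma dblList_hist (G : Game S) (π : ℕ → S) (h : ∀ n, G.E (π n) (π (n + 1))) (n : ℕ) :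
    dblList G (hist π n) = hist (dblPlay G π h) (2 * n) := by
  induction n generalizing π h with
  | zero =>
    have h0 : dblPlay G π h 0 = Sum.inl (π 0) := dblPlay_even G π h 0
    rw [hist_zero, show 2 * 0 = 0 from rfl, hist_zero, h0, dblList]
  | succ n ih =>
    have h0 : dblPlay G π h 0 = Sum.inl (π 0) := dblPlay_even G π h 0
    have h1 : dblPlay G π h 1 = Sum.inr ⟨(π 0, π 1), h 0⟩ := dblPlay_odd G π h 0
    have e1 : hist π (n + 1) = π 0 :: hist (fun i => π (i + 1)) n := hist_succ_shift π n
    have e2 : hist (fun i => π (i + 1)) n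
        = (fun i => π (i + 1)) 0 :: List.ofFn (fun i : Fin n => (fun i => π (i + 1)) (i + 1)) :=
      hist_eq _ n
    rw [e1, e2, dblList, dif_pos (h 0), ← e2,
      ih (fun i => π (i + 1)) (fun i => h (i + 1)),
      show 2 * (n + 1) = 2 * n + 2 by ring, hist_succ2, dblPlay_shift2, h0, h1]

end MPAE
namespace MPAE

lemma dblList_head (G : Game S) (s : S) (l : List S) :
    (dblList G (s :: l)).head? = some (Sum.inl s) := by
  cases l with
  | nil => rfl
  | cons s' l =>
    rw [dblList]
    split_ifs <;> rfl

lemma dblList_spec (G : Game S) : ∀ (ρ : List S) (h : ρ ≠ []), List.Chain' G.E ρ →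
    ∃ h' : dblList G ρ ≠ [], List.Chain' (dblGame G).E (dblList G ρ) ∧
      (dblList G ρ).getLast h' = Sum.inl (ρ.getLast h) := by
  intro ρ
  induction ρ with
  | nil => intro h; exact absurd rfl h
  | cons s l ih =>
    intro _ hchain
    cases l with
    | nil =>
      refine ⟨by simp [dblList], ?_, rfl⟩
      simp [dblList, List.Chain', List.isChain_singleton]
    | cons s' l =>
      have hE : G.E s s' := List.isChain_cons_cons.mp hchain |>.1
      have hchain' : List.Chain' G.E (s' :: l) := List.isChain_cons_cons.mp hchain |>.2
      obtain ⟨h', hch, hlast⟩ := ih (by simp) hchain'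
      rw [dblList, dif_pos hE]
      have hne : (Sum.inl s :: Sum.inr ⟨(s, s'), hE⟩ :: dblList G (s' :: l) :
          List (S ⊕ {e : S × S // G.E e.1 e.2})) ≠ [] := by simp
      refine ⟨hne, ?_, ?_⟩
      · rw [List.Chain', List.isChain_cons_cons]
        constructor
        · rfl
        · rw [List.isChain_cons]
          refine ⟨?_, hch⟩
          intro b hb
          rw [dblList_head] at hb
          cases hb
          rfl
      · conv_rhs => rw [List.getLast_cons (by simp : (s' :: l) ≠ [])]
        rw [List.getLast_cons (by simp), List.getLast_cons h', hlast]

end MPAE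
namespace MPAE

/-- Pull a strategy of the doubled game back to `G`. -/
def revStrat (G : Game S) (s₀ : S)
    (σ' : List (S ⊕ {e : S × S // G.E e.1 e.2}) → (S ⊕ {e : S × S // G.E e.1 e.2})) :
    List S → S := fun ρ =>
  match σ' (dblList G ρ) with
  | Sum.inr e => e.1.2
  | Sum.inl _ => s₀

lemma revStrat_spec (G : Game S) (s₀ : S)
    (σ' : List (S ⊕ {e : S × S // G.E e.1 e.2}) → (S ⊕ {e : S × S // G.E e.1 e.2}))
    (hσ' : IsStrat1 (dblGame G) σ') (ρ : List S) (h : ρ ≠ []) (hchain : List.Chain' G.E ρ)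
    (hp1 : G.p1 (ρ.getLast h)) :
    ∃ hE : G.E (ρ.getLast h) (revStrat G s₀ σ' ρ),
      σ' (dblList G ρ) = Sum.inr ⟨(ρ.getLast h, revStrat G s₀ σ' ρ), hE⟩ := by
  obtain ⟨h', hch, hlast⟩ := dblList_spec G ρ h hchain
  have hE' := hσ' (dblList G ρ) h' hch (by rw [hlast]; exact hp1)
  rw [hlast] at hE'
  rcases hval : σ' (dblList G ρ) with s1 | e
  · rw [hval] at hE'
    exact hE'.elim
  · rw [hval] at hE'
    have hrev : revStrat G s₀ σ' ρ = e.1.2 := by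
      simp only [revStrat, hval]
    have heq : (e.1.1 : S) = ρ.getLast h := hE'
    refine ⟨by rw [hrev, ← heq]; exact e.2, ?_⟩
    congr 1
    exact Subtype.ext (Prod.ext heq hrev.symm)

lemma reverse_dir [Fintype S] (G : Game S) (s₀ : S) (t : ℚ)
    (σ' : List (S ⊕ {e : S × S // G.E e.1 e.2}) → (S ⊕ {e : S × S // G.E e.1 e.2}))
    (hσ' : Winning1 (dblGame G) (Sum.inl s₀) σ' (AvgEnergyLevel (dblGame G) t)) :
    ∃ σ, Winning1 G s₀ σ (MeanPayOff G t) := by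
  refine ⟨revStrat G s₀ σ', ?_, ?_⟩
  · intro ρ h hchain hp1
    obtain ⟨hE, -⟩ := revStrat_spec G s₀ σ' hσ'.1 ρ h hchain hp1
    exact hE
  · intro π hplay hcons
    have hE : ∀ n, G.E (π n) (π (n + 1)) := hplay.2
    set π' := dblPlay G π hE with hπ'
    have hplay' : IsPlay (dblGame G) (Sum.inl s₀) π' := by
      constructor
      · rw [hπ', show (0 : ℕ) = 2 * 0 from rfl, dblPlay_even, hplay.1]
      · intro m
        rcases Nat.even_or_odd m with ⟨k, rfl⟩ | ⟨k, rfl⟩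
        · rw [hπ', show k + k = 2 * k from by ring, show 2 * k + 1 = 2 * k + 1 from rfl,
            dblPlay_even, dblPlay_odd]
          rfl
        · rw [hπ', show 2 * k + 1 + 1 = 2 * (k + 1) from by ring, dblPlay_even, dblPlay_odd]
          rfl
    have hcons' : Consistent1 (dblGame G) σ' π' := by
      intro m hp1'
      rcases Nat.even_or_odd m with ⟨k, rfl⟩ | ⟨k, rfl⟩
      · rw [hπ', show k + k = 2 * k from by ring] at hp1' ⊢
        rw [dblPlay_even] at hp1'
        have hp1 : G.p1 (π k) := hp1'
        have hrec := hcons k hp1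
        obtain ⟨hEr, hval⟩ := revStrat_spec G s₀ σ' hσ'.1 (hist π k) (hist_ne_nil π k)
          (hist_chain G π hE k) (by rw [hist_getLast]; exact hp1)
        rw [← dblList_hist G π hE k, hval, dblPlay_odd]
        congr 1
        exact Subtype.ext (Prod.ext (hist_getLast π k).symm hrec)
      · rw [hπ'] at hp1' ⊢
        have hlast : (hist (dblPlay G π hE) (2 * k + 1)).getLast
            (hist_ne_nil _ _) = Sum.inr ⟨(π k, π (k + 1)), hE k⟩ := by
          rw [hist_getLast, dblPlay_odd]
        have hEdge := hσ'.1 (hist (dblPlay G π hE) (2 * k + 1)) (hist_ne_nil _ _)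
          (hist_chain (dblGame G) (dblPlay G π hE) hplay'.2 (2 * k + 1))
          (by rw [hlast]; trivial)
        rw [hlast] at hEdge
        rcases hval : σ' (hist (dblPlay G π hE) (2 * k + 1)) with s1 | e
        · rw [hval] at hEdge
          have : π (k + 1) = s1 := hEdge
          rw [show 2 * k + 1 + 1 = 2 * (k + 1) from by ring, dblPlay_even, this]
        · rw [hval] at hEdge
          exact hEdge.elim
    have hae := hσ'.2 π' hplay' hcons'
    exact le_trans (MP_le_AE G π hE) hae

end MPAE
namespace MPAE

open Classical in
/-- Push a strategy of `G` to the doubled game. -/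
def fwdStrat (G : Game S) (s₀ : S) (σ : List S → S) :
    List (S ⊕ {e : S × S // G.E e.1 e.2}) → (S ⊕ {e : S × S // G.E e.1 e.2}) := fun ρ' =>
  match ρ'.getLast? with
  | some (Sum.inr e) => Sum.inl e.1.2
  | some (Sum.inl s) =>
      if h : G.E s (σ (undbl G ρ')) then Sum.inr ⟨(s, σ (undbl G ρ')), h⟩
      else Sum.inr ⟨(s, (G.succ s).choose), (G.succ s).choose_spec⟩
  | none => Sum.inl s₀

lemma fwdStrat_isStrat (G : Game S) (s₀ : S) (σ : List S → S) :
    IsStrat1 (dblGame G) (fwdStrat G s₀ σ) := by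
  intro ρ' h hchain hp1
  have hl : ρ'.getLast? = some (ρ'.getLast h) := List.getLast?_eq_getLast h
  rcases hx : ρ'.getLast h with s | e
  · rw [hx] at hl
    simp only [fwdStrat, hl]
    split_ifs <;> rfl
  · rw [hx] at hl
    simp only [fwdStrat, hl]
    rfl

lemma forward_dir [Fintype S] (G : Game S) (s₀ : S) (t : ℚ) (σ : List S → S)
    (hσ : Winning1 G s₀ σ (MeanPayOff G t)) :
    ∃ σ', Winning1 (dblGame G) (Sum.inl s₀) σ' (AvgEnergyLevel (dblGame G) t) := by
  refine ⟨fwdStrat G s₀ σ, fwdStrat_isStrat G s₀ σ, ?_⟩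
  intro π' hplay' hcons'
  -- the play alternates between `inl` and `inr` states
  have key : ∀ n, ∃ s, π' (2 * n) = Sum.inl s := by
    intro n
    induction n with
    | zero => exact ⟨s₀, hplay'.1⟩
    | succ n ih =>
      obtain ⟨s, hs⟩ := ih
      have h1 := hplay'.2 (2 * n)
      have h2 := hplay'.2 (2 * n + 1)
      rcases hmid : π' (2 * n + 1) with s1 | e
      · rw [hs, hmid] at h1
        exact h1.elim
      · rw [hmid] at h2
        rcases hnext : π' (2 * n + 1 + 1) with s' | e'
        · exact ⟨s', rfl⟩
        · rw [hnext] at h2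
          exact h2.elim
  choose π hπeven using key
  have key2 : ∀ n, ∃ e : {e : S × S // G.E e.1 e.2},
      π' (2 * n + 1) = Sum.inr e ∧ e.1.1 = π n ∧ e.1.2 = π (n + 1) := by
    intro n
    have h1 := hplay'.2 (2 * n)
    have h2 := hplay'.2 (2 * n + 1)
    rcases hmid : π' (2 * n + 1) with s1 | e
    · rw [hπeven n, hmid] at h1
      exact h1.elim
    · refine ⟨e, rfl, ?_, ?_⟩
      · rw [hπeven n, hmid] at h1
        exact h1
      · rw [hmid, show 2 * n + 1 + 1 = 2 * (n + 1) from by ring, hπeven (n + 1)] at h2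
        exact h2
  choose ev hev1 hev2 hev3 using key2
  have hE : ∀ n, G.E (π n) (π (n + 1)) := by
    intro n
    have := (ev n).2
    rw [hev2 n, hev3 n] at this
    exact this
  have hdp : π' = dblPlay G π hE := by
    funext m
    rcases Nat.even_or_odd m with ⟨k, rfl⟩ | ⟨k, rfl⟩
    · rw [show k + k = 2 * k from by ring, dblPlay_even, hπeven]
    · rw [dblPlay_odd, hev1 k]
      congr 1
      exact Subtype.ext (Prod.ext (hev2 k) (hev3 k))
  have hplayG : IsPlay G s₀ π := by
    refine ⟨?_, hE⟩
    have := hπeven 0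
    rw [show 2 * 0 = 0 from rfl, hplay'.1] at this
    exact (Sum.inl.inj this).symm
  have hconsG : Consistent1 G σ π := by
    intro n hp1
    have hp1' : (dblGame G).p1 (π' (2 * n)) := by rw [hπeven n]; exact hp1
    have hc := hcons' (2 * n) hp1'
    have hlq : (hist π' (2 * n)).getLast? = some (Sum.inl (π n)) := by
      rw [hist_getLast?, hπeven n]
    have hundbl : undbl G (hist π' (2 * n)) = hist π n := by
      rw [hdp]
      exact undbl_hist G π hE n
    have hcond : G.E (π n) (σ (hist π n)) := by
      have := hσ.1 (hist π n) (hist_ne_nil π n) (hist_chain G π hE n)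
        (by rw [hist_getLast]; exact hp1)
      rw [hist_getLast] at this
      exact this
    have hval : fwdStrat G s₀ σ (hist π' (2 * n)) =
        Sum.inr ⟨(π n, σ (hist π n)), hcond⟩ := by
      simp only [fwdStrat, hlq, hundbl]
      split_ifs with hh
      · rfl
      · rw [hundbl] at hh
        exact absurd hcond hh
    rw [hval, hev1 n] at hc
    have := Subtype.mk.injEq .. ▸ (Sum.inr.inj hc)
    have h2 : (ev n).1 = (π n, σ (hist π n)) := congrArg Subtype.val (Sum.inr.inj hc)
    rw [← hev3 n, h2]
  have hMP := hσ.2 π hplayG hconsG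
  have := AE_le_of_MP_le G π hE (t : ℝ) hMP
  rw [hdp]
  exact this

end MPAE

/-- Reduction of mean-payoff games to average-energy games by edge doubling: player 1 wins
`MeanPayOff t` from `s₀` in `G` iff he wins `AvgEnergyLevel t` from `s₀` in the doubled game. -/
theorem MP_reduces_to_AE {S : Type} [Fintype S] (G : Game S) (s₀ : S) (t : ℚ) :
    (∃ σ : List S → S, Winning1 G s₀ σ (MeanPayOff G t)) ↔
    (∃ σ, Winning1 (dblGame G) (Sum.inl s₀) σ (AvgEnergyLevel (dblGame G) t)) := by
  constructor
  · rintro ⟨σ, hσ⟩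
    exact MPAE.forward_dir G s₀ t σ hσ
  · rintro ⟨σ', hσ'⟩
    exact MPAE.reverse_dir G s₀ t σ' hσ'

end
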